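/- (Helly selection with dissipation) Let D : ℝⁿ → [0,∞) satisfy c_D|a| ≤ D(a) ≤ C_D|a| and the triangle inequality. If z^k : [0,T] → ℝⁿ is a sequence with sup_k Diss_D(z^k, [0,T]) < ∞ and sup_k sup_t |z^k(t)| < ∞, then there exists a subsequence, a function z : [0,T] → ℝⁿ, and a nondecreasing φ : [0,T] → [0,∞) such that z^k(t) → z(t) for all t, Diss_D(z^k,[0,t]) → φ(t) for all t, and Diss_D(z,[s,t]) ≤ φ(t) − φ(s) for all 0 ≤ s ≤ t ≤ T. -/

import Mathlib

open scoped ENNReal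
open Filter Topology

/-- The dissipation of `z` on `[s,t]`: supremum over finite partitions of `[s,t]`
of the sums of `D` of the increments. -/
noncomputable def diss {Z : Type*} [NormedAddCommGroup Z] (D : Z → ℝ)
    (z : ℝ → Z) (s t : ℝ) : ℝ≥0∞ :=
  ⨆ N : ℕ, ⨆ u : {u : Fin (N + 1) → ℝ // Monotone u ∧ u 0 = s ∧ u (Fin.last N) = t},
    ENNReal.ofReal (∑ i : Fin N, D (z (u.1 i.succ) - z (u.1 i.castSucc)))

namespace HellyAux

def Part (N : ℕ) (s t : ℝ) := {u : Fin (N + 1) → ℝ // Monotone u ∧ u 0 = s ∧ u (Fin.last N) = t}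

def catFun {N M : ℕ} (u : Fin (N + 1) → ℝ) (w : Fin (M + 1) → ℝ) : Fin (N + M + 1) → ℝ :=
  fun i => if h : (i : ℕ) ≤ N then u ⟨i, Nat.lt_succ_of_le h⟩
    else w ⟨(i : ℕ) - N, by have := i.isLt; omega⟩

section cat
variable {N M : ℕ} {u : Fin (N + 1) → ℝ} {w : Fin (M + 1) → ℝ}

lemma catFun_left {i : Fin (N + M + 1)} (h : (i : ℕ) ≤ N) :
    catFun u w i = u ⟨i, Nat.lt_succ_of_le h⟩ := dif_pos h

lemma catFun_right (hl : u (Fin.last N) = w 0) {i : Fin (N + M + 1)} (h : N ≤ (i : ℕ)) :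
    catFun u w i = w ⟨(i : ℕ) - N, by have := i.isLt; omega⟩ := by
  by_cases h2 : (i : ℕ) ≤ N
  · have hi : (i : ℕ) = N := le_antisymm h2 h
    rw [catFun_left h2]
    have h3 : (⟨(i : ℕ), Nat.lt_succ_of_le h2⟩ : Fin (N + 1)) = Fin.last N := by
      ext; simpa using hi
    have h4 : (⟨(i : ℕ) - N, by have := i.isLt; omega⟩ : Fin (M + 1)) = 0 := by
      ext; simp [hi]
    rw [h3, h4, hl]
  · exact dif_neg h2

lemma catFun_monotone (hu : Monotone u) (hw : Monotone w) (hl : u (Fin.last N) = w 0) :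
    Monotone (catFun u w) := by
  intro i j hij
  have hij' : (i : ℕ) ≤ (j : ℕ) := hij
  by_cases hj : (j : ℕ) ≤ N
  · rw [catFun_left (le_trans hij' hj), catFun_left hj]
    exact hu (by simpa [Fin.mk_le_mk] using hij')
  · push_neg at hj
    rw [catFun_right hl (le_of_lt hj)]
    by_cases hi : (i : ℕ) ≤ N
    · rw [catFun_left hi]
      calc u ⟨(i : ℕ), Nat.lt_succ_of_le hi⟩ ≤ u (Fin.last N) := hu (Fin.le_last _)
        _ = w 0 := hl
        _ ≤ w _ := hw (Fin.zero_le _)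
    · push_neg at hi
      rw [catFun_right hl (le_of_lt hi)]
      exact hw (by simp [Fin.mk_le_mk]; omega)

lemma catFun_zero : catFun u w 0 = u 0 := by
  rw [catFun_left (by simp)]
  exact congrArg u (Fin.ext (by simp))

lemma catFun_last (hl : u (Fin.last N) = w 0) :
    catFun u w (Fin.last (N + M)) = w (Fin.last M) := by
  rw [catFun_right hl (by simp)]
  congr 1
  ext; simp

lemma catFun_sum {Z : Type*} [NormedAddCommGroup Z] (D : Z → ℝ) (z : ℝ → Z)
    (hl : u (Fin.last N) = w 0) :
    (∑ i : Fin (N + M), D (z (catFun u w i.succ) - z (catFun u w i.castSucc))) =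
      (∑ i : Fin N, D (z (u i.succ) - z (u i.castSucc))) +
      (∑ i : Fin M, D (z (w i.succ) - z (w i.castSucc))) := by
  rw [Fin.sum_univ_add]
  congr 1
  · refine Finset.sum_congr rfl fun i _ => ?_
    have h1 : catFun u w (Fin.castAdd M i).succ = u i.succ := by
      rw [catFun_left (by simp [Nat.succ_le_of_lt i.isLt])]
      exact congrArg u (Fin.ext (by simp))
    have h2 : catFun u w (Fin.castAdd M i).castSucc = u i.castSucc := by
      rw [catFun_left (by simp [le_of_lt i.isLt])]
      exact congrArg u (Fin.ext (by simp))
    rw [h1, h2]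
  · refine Finset.sum_congr rfl fun i _ => ?_
    have h1 : catFun u w (Fin.natAdd N i).succ = w i.succ := by
      rw [catFun_right hl (by simp; omega)]
      congr 1; ext; simp; omega
    have h2 : catFun u w (Fin.natAdd N i).castSucc = w i.castSucc := by
      rw [catFun_right hl (by simp)]
      congr 1; ext; simp
    rw [h1, h2]

end cat

variable {Z : Type*} [NormedAddCommGroup Z]

lemma diss_eq (D : Z → ℝ) (z : ℝ → Z) (s t : ℝ) :
    diss D z s t = ⨆ p : Σ N : ℕ, Part N s t,
      ENNReal.ofReal (∑ i : Fin p.1, D (z (p.2.1 i.succ) - z (p.2.1 i.castSucc))) := by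
  rw [diss, iSup_sigma]
  rfl

lemma single_le_diss (D : Z → ℝ) (z : ℝ → Z) {s t : ℝ} {N : ℕ} (u : Part N s t) :
    ENNReal.ofReal (∑ i : Fin N, D (z (u.1 i.succ) - z (u.1 i.castSucc))) ≤ diss D z s t := by
  rw [diss_eq]
  exact le_iSup (fun p : Σ N : ℕ, Part N s t =>
    ENNReal.ofReal (∑ i : Fin p.1, D (z (p.2.1 i.succ) - z (p.2.1 i.castSucc)))) ⟨N, u⟩

def twoPart {s t : ℝ} (h : s ≤ t) : Part 1 s t :=
  ⟨![s, t], by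
    constructor
    · intro i j hij
      fin_cases i <;> fin_cases j <;> simp_all
    · exact ⟨rfl, rfl⟩⟩

lemma part_nonempty {s t : ℝ} (h : s ≤ t) : Nonempty (Σ N : ℕ, Part N s t) := ⟨⟨1, twoPart h⟩⟩

lemma ofReal_D_le_diss (D : Z → ℝ) (z : ℝ → Z) {s t : ℝ} (h : s ≤ t) :
    ENNReal.ofReal (D (z t - z s)) ≤ diss D z s t := by
  have := single_le_diss D z (twoPart h)
  simpa [twoPart, Fin.sum_univ_succ] using this

lemma diss_superadd (D : Z → ℝ) (hD : ∀ a, 0 ≤ D a) (z : ℝ → Z) {s t r : ℝ}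
    (hst : s ≤ t) (htr : t ≤ r) : diss D z s t + diss D z t r ≤ diss D z s r := by
  rw [diss_eq D z s t, diss_eq D z t r]
  haveI := part_nonempty hst
  haveI := part_nonempty htr
  refine ENNReal.iSup_add_iSup_le fun p q => ?_
  obtain ⟨N, u, hu, hu0, huN⟩ := p
  obtain ⟨M, w, hw, hw0, hwM⟩ := q
  have hl : u (Fin.last N) = w 0 := by rw [huN, hw0]
  rw [← ENNReal.ofReal_add (Finset.sum_nonneg fun i _ => hD _)
    (Finset.sum_nonneg fun i _ => hD _), ← catFun_sum D z hl]
  exact single_le_diss D z ⟨catFun u w, catFun_monotone hu hw hl,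
    by rw [catFun_zero, hu0], by rw [catFun_last hl, hwM]⟩

/-- running dissipation, as a real number -/
noncomputable def vr (D : Z → ℝ) (zz : ℝ → Z) (t : ℝ) : ℝ := (diss D zz 0 t).toReal

lemma extract_subseq {ι : Type*} [Countable ι] {X : ι → Type*} [∀ i, TopologicalSpace (X i)]
    [∀ i, TopologicalSpace.PseudoMetrizableSpace (X i)] {K : ∀ i, Set (X i)}
    (hK : ∀ i, IsCompact (K i)) (f : ℕ → ∀ i, X i) (hf : ∀ k i, f k i ∈ K i) :
    ∃ φ : ℕ → ℕ, StrictMono φ ∧ ∃ g : ∀ i, X i,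
      ∀ i, Tendsto (fun k => f (φ k) i) atTop (𝓝 (g i)) := by
  have hc : IsCompact (Set.univ.pi K) := isCompact_univ_pi hK
  have hseq := hc.isSeqCompact (x := f) (fun k => by
    rw [Set.mem_univ_pi]; exact fun i => hf k i)
  obtain ⟨g, _, φ, hφ, hconv⟩ := hseq
  exact ⟨φ, hφ, g, fun i => tendsto_pi_nhds.mp hconv i⟩

lemma rat_left (T : ℝ) (hT : 0 < T) (t : ℝ) (ht : t ∈ Set.Icc 0 T) (δ : ℝ) (hδ : 0 < δ) :
    ∃ q ∈ Set.Icc 0 T ∩ ({0, T} ∪ Set.range ((↑) : ℚ → ℝ)), q ≤ t ∧ t - q < δ := by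
  rcases eq_or_lt_of_le ht.1 with h0 | h0
  · exact ⟨0, ⟨⟨le_refl 0, hT.le⟩, Or.inl (by simp)⟩, by rw [← h0], by rw [← h0]; simpa using hδ⟩
  · obtain ⟨q, hq1, hq2⟩ := exists_rat_btwn (show max 0 (t - δ) < t by
      rw [max_lt_iff]; exact ⟨h0, by linarith⟩)
    rw [max_lt_iff] at hq1
    exact ⟨q, ⟨⟨hq1.1.le, hq2.le.trans ht.2⟩, Or.inr ⟨q, rfl⟩⟩, hq2.le, by linarith [hq1.2]⟩

lemma rat_right (T : ℝ) (t : ℝ) (ht : t ∈ Set.Icc 0 T) (δ : ℝ) (hδ : 0 < δ) :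
    ∃ q ∈ Set.Icc 0 T ∩ ({0, T} ∪ Set.range ((↑) : ℚ → ℝ)), t ≤ q ∧ q - t < δ := by
  rcases eq_or_lt_of_le ht.2 with h0 | h0
  · exact ⟨T, ⟨⟨ht.1.trans ht.2, le_refl T⟩, Or.inl (by simp)⟩, by rw [h0], by rw [h0]; simpa using hδ⟩
  · obtain ⟨q, hq1, hq2⟩ := exists_rat_btwn (show t < min T (t + δ) by
      rw [lt_min_iff]; exact ⟨h0, by linarith⟩)
    rw [lt_min_iff] at hq2
    exact ⟨q, ⟨⟨ht.1.trans hq1.le, hq2.1.le⟩, Or.inr ⟨q, rfl⟩⟩, hq1.le, by linarith [hq2.2]⟩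

end HellyAux

open HellyAux

/-- Helly selection principle with dissipation. -/
theorem stmt18 {n : ℕ} (D : EuclideanSpace ℝ (Fin n) → ℝ)
    (cD CD : ℝ) (hcD : 0 < cD) (hCD : 0 < CD)
    (hlow : ∀ a, cD * ‖a‖ ≤ D a) (hup : ∀ a, D a ≤ CD * ‖a‖)
    (hsub : ∀ a b, D (a + b) ≤ D a + D b)
    (T : ℝ) (hT : 0 < T)
    (z : ℕ → ℝ → EuclideanSpace ℝ (Fin n))
    (Mdiss Mnorm : ℝ)
    (hdiss : ∀ k, diss D (z k) 0 T ≤ ENNReal.ofReal Mdiss)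
    (hbd : ∀ k, ∀ t ∈ Set.Icc 0 T, ‖z k t‖ ≤ Mnorm) :
    ∃ φ : ℕ → ℕ, StrictMono φ ∧
    ∃ (zl : ℝ → EuclideanSpace ℝ (Fin n)) (ψ : ℝ → ℝ),
      MonotoneOn ψ (Set.Icc 0 T) ∧ (∀ t ∈ Set.Icc 0 T, 0 ≤ ψ t) ∧
      (∀ t ∈ Set.Icc 0 T,
        Filter.Tendsto (fun k => z (φ k) t) Filter.atTop (nhds (zl t))) ∧
      (∀ t ∈ Set.Icc 0 T,
        Filter.Tendsto (fun k => diss D (z (φ k)) 0 t) Filter.atTop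
          (nhds (ENNReal.ofReal (ψ t)))) ∧
      (∀ s t : ℝ, 0 ≤ s → s ≤ t → t ≤ T → diss D zl s t ≤ ENNReal.ofReal (ψ t - ψ s)) := by
  classical
  -- properties of D
  have hDnn : ∀ a, 0 ≤ D a := fun a => le_trans (by positivity) (hlow a)
  have hDlip : ∀ a b, |D a - D b| ≤ CD * ‖a - b‖ := by
    intro a b
    rw [abs_sub_le_iff]
    have e1 : b + (a - b) = a := by abel
    have e2 : a + (b - a) = b := by abel
    constructor
    · have h1 := hsub b (a - b)
      rw [e1] at h1
      have := hup (a - b)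
      linarith
    · have h1 := hsub a (b - a)
      rw [e2] at h1
      have h2 := hup (b - a)
      rw [norm_sub_rev] at h2
      linarith
  have hDcont : Continuous D := by
    have : LipschitzWith (Real.toNNReal CD) D := LipschitzWith.of_dist_le_mul (fun a b => by
      rw [Real.dist_eq, dist_eq_norm, Real.coe_toNNReal _ hCD.le]; exact hDlip a b)
    exact this.continuous
  -- finiteness of dissipations
  have hfin : ∀ k, ∀ t ∈ Set.Icc 0 T, diss D (z k) 0 t ≠ ∞ := by
    intro k t ht
    have h1 : diss D (z k) 0 t ≤ diss D (z k) 0 T :=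
      le_trans le_self_add (diss_superadd D hDnn (z k) ht.1 ht.2)
    exact ne_top_of_le_ne_top ENNReal.ofReal_ne_top (h1.trans (hdiss k))
  set B := max Mdiss 0 with hBdef
  have hv0 : ∀ k t, 0 ≤ vr D (z k) t := fun k t => ENNReal.toReal_nonneg
  have hvB : ∀ k, ∀ t ∈ Set.Icc 0 T, vr D (z k) t ≤ B := by
    intro k t ht
    have h1 : diss D (z k) 0 t ≤ ENNReal.ofReal B :=
      le_trans (le_trans le_self_add (diss_superadd D hDnn (z k) ht.1 ht.2))
        ((hdiss k).trans (ENNReal.ofReal_le_ofReal (le_max_left _ _)))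
    have h2 := ENNReal.toReal_mono ENNReal.ofReal_ne_top h1
    rwa [ENNReal.toReal_ofReal (le_max_right Mdiss 0)] at h2
  have hvmono : ∀ k s t, 0 ≤ s → s ≤ t → t ≤ T → vr D (z k) s ≤ vr D (z k) t := by
    intro k s t h0 hst htT
    refine ENNReal.toReal_mono (hfin k t ⟨h0.trans hst, htT⟩) ?_
    exact le_trans le_self_add (diss_superadd D hDnn (z k) h0 hst)
  have hjump : ∀ k s t, 0 ≤ s → s ≤ t → t ≤ T →
      cD * ‖z k t - z k s‖ ≤ vr D (z k) t - vr D (z k) s := by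
    intro k s t h0 hst htT
    have h1 : diss D (z k) 0 s + ENNReal.ofReal (D (z k t - z k s)) ≤ diss D (z k) 0 t :=
      le_trans (add_le_add le_rfl (ofReal_D_le_diss D (z k) hst))
        (diss_superadd D hDnn (z k) h0 hst)
    have h2 := ENNReal.toReal_mono (hfin k t ⟨h0.trans hst, htT⟩) h1
    rw [ENNReal.toReal_add (hfin k s ⟨h0, hst.trans htT⟩) ENNReal.ofReal_ne_top,
      ENNReal.toReal_ofReal (hDnn _)] at h2
    have h3 := hlow (z k t - z k s)
    have : (diss D (z k) 0 s).toReal = vr D (z k) s := rfl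
    have : (diss D (z k) 0 t).toReal = vr D (z k) t := rfl
    simp only [vr]
    linarith
  -- the countable set Q0
  set Q0 : Set ℝ := Set.Icc 0 T ∩ ({0, T} ∪ Set.range ((↑) : ℚ → ℝ)) with hQ0def
  have hQ0c : Q0.Countable := Set.Countable.mono Set.inter_subset_right
    (((Set.countable_singleton T).insert 0).union (Set.countable_range _))
  haveI : Countable ↥Q0 := hQ0c.to_subtype
  -- first extraction: convergence on Q0
  obtain ⟨φ₁, hφ₁, g₁, hg₁⟩ := extract_subseq (ι := ↥Q0)
    (X := fun _ => EuclideanSpace ℝ (Fin n) × ℝ)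
    (K := fun _ => Metric.closedBall 0 Mnorm ×ˢ Set.Icc 0 B)
    (fun _ => (isCompact_closedBall 0 Mnorm).prod isCompact_Icc)
    (fun k q => (z k q, vr D (z k) q))
    (fun k q => ⟨by rw [Metric.mem_closedBall, dist_zero_right]; exact hbd k q q.2.1,
      ⟨hv0 _ _, hvB k q q.2.1⟩⟩)
  set a : ↥Q0 → ℝ := fun q => (g₁ q).2 with hadef
  have hza : ∀ q : ↥Q0, Tendsto (fun k => z (φ₁ k) q) atTop (𝓝 (g₁ q).1) :=
    fun q => (continuous_fst.tendsto _).comp (hg₁ q)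
  have hva : ∀ q : ↥Q0, Tendsto (fun k => vr D (z (φ₁ k)) q) atTop (𝓝 (a q)) :=
    fun q => (continuous_snd.tendsto _).comp (hg₁ q)
  have hamono : ∀ q q' : ↥Q0, (q : ℝ) ≤ (q' : ℝ) → a q ≤ a q' :=
    fun q q' h => le_of_tendsto_of_tendsto' (hva q) (hva q')
      (fun k => hvmono _ _ _ q.2.1.1 h q'.2.1.2)
  have ha0 : ∀ q : ↥Q0, 0 ≤ a q :=
    fun q => le_of_tendsto_of_tendsto' tendsto_const_nhds (hva q) (fun k => hv0 _ _)
  have haB : ∀ q : ↥Q0, a q ≤ B :=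
    fun q => le_of_tendsto_of_tendsto' (hva q) tendsto_const_nhds (fun k => hvB _ _ q.2.1)
  -- the monotone regularization
  set ψt : ℝ → ℝ := fun t => sSup (a '' {q : ↥Q0 | (q : ℝ) ≤ t}) with hψtdef
  have hbdd : ∀ t, BddAbove (a '' {q : ↥Q0 | (q : ℝ) ≤ t}) :=
    fun t => ⟨B, by rintro x ⟨q, _, rfl⟩; exact haB q⟩
  have hψt0 : ∀ t, 0 ≤ ψt t := by
    intro t
    by_cases hne : {q : ↥Q0 | (q : ℝ) ≤ t}.Nonempty
    · obtain ⟨q, hq⟩ := hne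
      exact le_trans (ha0 q) (le_csSup (hbdd t) ⟨q, hq, rfl⟩)
    · have he : a '' {q : ↥Q0 | (q : ℝ) ≤ t} = ∅ := by
        rw [Set.image_eq_empty]
        exact Set.not_nonempty_iff_eq_empty.mp hne
      simp only [hψtdef, he, Real.sSup_empty, le_refl]
  have hψtmono : Monotone ψt := by
    intro s t hst
    by_cases hne : {q : ↥Q0 | (q : ℝ) ≤ s}.Nonempty
    · exact csSup_le_csSup (hbdd t) (hne.image a)
        (Set.image_mono (fun q hq => le_trans hq hst))
    · have he : a '' {q : ↥Q0 | (q : ℝ) ≤ s} = ∅ := by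
        rw [Set.image_eq_empty]
        exact Set.not_nonempty_iff_eq_empty.mp hne
      calc ψt s = 0 := by simp only [hψtdef, he, Real.sSup_empty]
        _ ≤ ψt t := hψt0 t
  have hψtq : ∀ (x : ℝ) (hx : x ∈ Q0), ψt x = a ⟨x, hx⟩ := by
    intro x hx
    apply le_antisymm
    · refine csSup_le ⟨a ⟨x, hx⟩, ⟨⟨x, hx⟩, show (x : ℝ) ≤ x from le_refl x, rfl⟩⟩ ?_
      rintro y ⟨q', hq', rfl⟩
      exact hamono _ _ hq'
    · exact le_csSup (hbdd _) ⟨⟨x, hx⟩, show (x : ℝ) ≤ x from le_refl x, rfl⟩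
  -- the countable set of discontinuities
  set S2 : Set ℝ := {x ∈ Set.Icc 0 T | ¬ContinuousAt ψt x} with hS2def
  have hS2c : S2.Countable :=
    Set.Countable.mono (fun x hx => hx.2) hψtmono.countable_not_continuousAt
  haveI : Countable ↥S2 := hS2c.to_subtype
  -- second extraction: convergence on S2
  obtain ⟨φ₂, hφ₂, g₂, hg₂⟩ := extract_subseq (ι := ↥S2)
    (X := fun _ => EuclideanSpace ℝ (Fin n) × ℝ)
    (K := fun _ => Metric.closedBall 0 Mnorm ×ˢ Set.Icc 0 B)
    (fun _ => (isCompact_closedBall 0 Mnorm).prod isCompact_Icc)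
    (fun k x => (z (φ₁ k) x, vr D (z (φ₁ k)) x))
    (fun k x => ⟨by rw [Metric.mem_closedBall, dist_zero_right]; exact hbd _ x x.2.1,
      ⟨hv0 _ _, hvB _ _ x.2.1⟩⟩)
  set σ : ℕ → ℕ := φ₁ ∘ φ₂ with hσdef
  have hσmono : StrictMono σ := hφ₁.comp hφ₂
  have hvaσ : ∀ q : ↥Q0, Tendsto (fun k => vr D (z (σ k)) q) atTop (𝓝 (a q)) :=
    fun q => (hva q).comp hφ₂.tendsto_atTop
  have hzaσ : ∀ q : ↥Q0, Tendsto (fun k => z (σ k) q) atTop (𝓝 (g₁ q).1) :=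
    fun q => (hza q).comp hφ₂.tendsto_atTop
  have hvsσ : ∀ x : ↥S2, Tendsto (fun k => vr D (z (σ k)) x) atTop (𝓝 (g₂ x).2) :=
    fun x => (continuous_snd.tendsto _).comp (hg₂ x)
  have hzsσ : ∀ x : ↥S2, Tendsto (fun k => z (σ k) x) atTop (𝓝 (g₂ x).1) :=
    fun x => (continuous_fst.tendsto _).comp (hg₂ x)
  -- convergence of the running dissipation at continuity points
  have claim1 : ∀ t ∈ Set.Icc 0 T, ContinuousAt ψt t →
      Tendsto (fun k => vr D (z (σ k)) t) atTop (𝓝 (ψt t)) := by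
    intro t ht hcont
    rw [Metric.tendsto_atTop]
    intro ε hε
    obtain ⟨δ, hδ, hδ2⟩ := Metric.continuousAt_iff.mp hcont (ε / 2) (by linarith)
    obtain ⟨q1, hq1Q, hq1le, hq1δ⟩ := rat_left T hT t ht δ hδ
    obtain ⟨q2, hq2Q, hq2ge, hq2δ⟩ := rat_right T t ht δ hδ
    have hd1 : |ψt q1 - ψt t| < ε / 2 := by
      have := hδ2 (x := q1) (by rw [Real.dist_eq, abs_lt]; constructor <;> linarith)
      rwa [Real.dist_eq] at this
    have hd2 : |ψt q2 - ψt t| < ε / 2 := by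
      have := hδ2 (x := q2) (by rw [Real.dist_eq, abs_lt]; constructor <;> linarith)
      rwa [Real.dist_eq] at this
    obtain ⟨N1, hN1⟩ := Metric.tendsto_atTop.mp (hvaσ ⟨q1, hq1Q⟩) (ε / 2) (by linarith)
    obtain ⟨N2, hN2⟩ := Metric.tendsto_atTop.mp (hvaσ ⟨q2, hq2Q⟩) (ε / 2) (by linarith)
    refine ⟨max N1 N2, fun k hk => ?_⟩
    have h1 := hN1 k (le_trans (le_max_left _ _) hk)
    have h2 := hN2 k (le_trans (le_max_right _ _) hk)
    rw [Real.dist_eq] at h1 h2 ⊢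
    have hm1 : vr D (z (σ k)) q1 ≤ vr D (z (σ k)) t := hvmono (σ k) q1 t hq1Q.1.1 hq1le ht.2
    have hm2 : vr D (z (σ k)) t ≤ vr D (z (σ k)) q2 := hvmono (σ k) t q2 ht.1 hq2ge hq2Q.1.2
    have ha1 : ψt q1 = a ⟨q1, hq1Q⟩ := hψtq q1 hq1Q
    have ha2 : ψt q2 = a ⟨q2, hq2Q⟩ := hψtq q2 hq2Q
    rw [abs_lt] at h1 h2 hd1 hd2 ⊢
    constructor <;> [nlinarith; nlinarith]
  -- limits of the running dissipation everywhere
  have hvlim : ∀ t ∈ Set.Icc 0 T, ∃ L, Tendsto (fun k => vr D (z (σ k)) t) atTop (𝓝 L) := by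
    intro t ht
    by_cases hc : ContinuousAt ψt t
    · exact ⟨ψt t, claim1 t ht hc⟩
    · exact ⟨(g₂ ⟨t, ht, hc⟩).2, hvsσ ⟨t, ht, hc⟩⟩
  set ψ : ℝ → ℝ := fun t => if h : t ∈ Set.Icc 0 T then (hvlim t h).choose else 0 with hψdef
  have hψconv : ∀ t, ∀ h : t ∈ Set.Icc 0 T,
      Tendsto (fun k => vr D (z (σ k)) t) atTop (𝓝 (ψ t)) := by
    intro t h
    have he : ψ t = (hvlim t h).choose := by simp only [hψdef, dif_pos h]
    rw [he]
    exact (hvlim t h).choose_spec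
  have hψ0 : ∀ t ∈ Set.Icc 0 T, 0 ≤ ψ t := fun t h =>
    le_of_tendsto_of_tendsto' tendsto_const_nhds (hψconv t h) (fun k => hv0 _ _)
  have hψmono : MonotoneOn ψ (Set.Icc 0 T) := fun s hs t ht hst =>
    le_of_tendsto_of_tendsto' (hψconv s hs) (hψconv t ht)
      (fun k => hvmono _ _ _ hs.1 hst ht.2)
  -- limits of z everywhere
  have hzlim : ∀ t ∈ Set.Icc 0 T, ∃ w, Tendsto (fun k => z (σ k) t) atTop (𝓝 w) := by
    intro t ht
    by_cases hq : t ∈ Q0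
    · exact ⟨_, hzaσ ⟨t, hq⟩⟩
    by_cases hc : ContinuousAt ψt t
    · -- Cauchy argument
      apply cauchySeq_tendsto_of_complete
      rw [Metric.cauchySeq_iff]
      intro ε hε
      obtain ⟨δ, hδ, hδ2⟩ := Metric.continuousAt_iff.mp hc (cD * ε / 6) (by positivity)
      obtain ⟨q, hqQ, hqle, hqδ⟩ := rat_left T hT t ht δ hδ
      have hψtqq : ψt q = a ⟨q, hqQ⟩ := hψtq q hqQ
      have hlim2 : Tendsto (fun k => vr D (z (σ k)) t - vr D (z (σ k)) q) atTop
          (𝓝 (ψt t - ψt q)) := by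
        refine (claim1 t ht hc).sub ?_
        rw [hψtqq]
        exact hvaσ ⟨q, hqQ⟩
      have hsmall : ψt t - ψt q < cD * ε / 6 := by
        have := hδ2 (x := q) (by rw [Real.dist_eq, abs_lt]; constructor <;> linarith)
        rw [Real.dist_eq, abs_lt] at this
        linarith [this.1]
      have hev1 : ∀ᶠ k in atTop, vr D (z (σ k)) t - vr D (z (σ k)) q < cD * (ε / 3) :=
        hlim2.eventually_lt_const (by nlinarith)
      obtain ⟨N2, hN2⟩ := eventually_atTop.mp hev1
      have hcau := (hzaσ ⟨q, hqQ⟩).cauchySeq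
      rw [Metric.cauchySeq_iff] at hcau
      obtain ⟨N1, hN1⟩ := hcau (ε / 3) (by linarith)
      have key : ∀ j, N2 ≤ j → dist (z (σ j) t) (z (σ j) q) < ε / 3 := by
        intro j hj
        have h1 := hN2 j hj
        have h2 := hjump (σ j) q t hqQ.1.1 hqle ht.2
        rw [dist_eq_norm]
        nlinarith
      refine ⟨max N1 N2, fun m hm k hk => ?_⟩
      have hk1 := key m (le_trans (le_max_right _ _) hm)
      have hk2 := key k (le_trans (le_max_right _ _) hk)
      have hk3 := hN1 m (le_trans (le_max_left _ _) hm) k (le_trans (le_max_left _ _) hk)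
      calc dist (z (σ m) t) (z (σ k) t)
          ≤ dist (z (σ m) t) (z (σ m) q) + dist (z (σ m) q) (z (σ k) q)
            + dist (z (σ k) q) (z (σ k) t) := dist_triangle4 _ _ _ _
        _ < ε / 3 + ε / 3 + ε / 3 := by
            rw [dist_comm (z (σ k) q)]
            exact add_lt_add (add_lt_add hk1 hk3) hk2
        _ = ε := by ring
    · exact ⟨_, hzsσ ⟨t, ht, hc⟩⟩
  set zl : ℝ → EuclideanSpace ℝ (Fin n) :=
    fun t => if h : t ∈ Set.Icc 0 T then (hzlim t h).choose else 0 with hzldef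
  have hzl : ∀ t, ∀ h : t ∈ Set.Icc 0 T,
      Tendsto (fun k => z (σ k) t) atTop (𝓝 (zl t)) := by
    intro t h
    have he : zl t = (hzlim t h).choose := by simp only [hzldef, dif_pos h]
    rw [he]
    exact (hzlim t h).choose_spec
  refine ⟨σ, hσmono, zl, ψ, hψmono, hψ0, (fun t ht => hzl t ht), ?_, ?_⟩
  · -- convergence of dissipations
    intro t ht
    have heq : (fun k => diss D (z (σ k)) 0 t)
        = fun k => ENNReal.ofReal (vr D (z (σ k)) t) := by
      funext k
      exact (ENNReal.ofReal_toReal (hfin (σ k) t ht)).symm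
    rw [heq]
    exact (ENNReal.continuous_ofReal.tendsto _).comp (hψconv t ht)
  · -- lower semicontinuity of the dissipation
    intro s t hs hst htT
    rw [diss_eq]
    refine iSup_le fun p => ?_
    obtain ⟨N, u, hu, hu0, huN⟩ := p
    simp only
    refine ENNReal.ofReal_le_ofReal ?_
    have hmem : ∀ i : Fin (N + 1), u i ∈ Set.Icc 0 T := by
      intro i
      constructor
      · have : u 0 ≤ u i := hu (Fin.zero_le i)
        rw [hu0] at this
        linarith
      · have : u i ≤ u (Fin.last N) := hu (Fin.le_last i)
        rw [huN] at this
        linarith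
    have hbound : ∀ k, (∑ i : Fin N, D (z (σ k) (u i.succ) - z (σ k) (u i.castSucc)))
        ≤ vr D (z (σ k)) t - vr D (z (σ k)) s := by
      intro k
      have h1 : ENNReal.ofReal (∑ i : Fin N, D (z (σ k) (u i.succ) - z (σ k) (u i.castSucc)))
          ≤ diss D (z (σ k)) s t := single_le_diss D (z (σ k)) ⟨u, hu, hu0, huN⟩
      have h2 : diss D (z (σ k)) 0 s
            + ENNReal.ofReal (∑ i : Fin N, D (z (σ k) (u i.succ) - z (σ k) (u i.castSucc)))
          ≤ diss D (z (σ k)) 0 t :=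
        le_trans (add_le_add le_rfl h1) (diss_superadd D hDnn _ hs hst)
      have h3 := ENNReal.toReal_mono (hfin (σ k) t ⟨hs.trans hst, htT⟩) h2
      rw [ENNReal.toReal_add (hfin (σ k) s ⟨hs, hst.trans htT⟩) ENNReal.ofReal_ne_top,
        ENNReal.toReal_ofReal (Finset.sum_nonneg fun i _ => hDnn _)] at h3
      have e1 : (diss D (z (σ k)) 0 s).toReal = vr D (z (σ k)) s := rfl
      have e2 : (diss D (z (σ k)) 0 t).toReal = vr D (z (σ k)) t := rfl
      rw [e1, e2] at h3
      linarith
    have htends : Tendsto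
        (fun k => ∑ i : Fin N, D (z (σ k) (u i.succ) - z (σ k) (u i.castSucc))) atTop
        (𝓝 (∑ i : Fin N, D (zl (u i.succ) - zl (u i.castSucc)))) :=
      tendsto_finset_sum _ fun i _ => (hDcont.tendsto _).comp
        ((hzl _ (hmem i.succ)).sub (hzl _ (hmem i.castSucc)))
    exact le_of_tendsto_of_tendsto' htends
      ((hψconv t ⟨hs.trans hst, htT⟩).sub (hψconv s ⟨hs, hst.trans htT⟩)) hbound
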